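/- For every integer n ≥ 2, define R_γ(p) = β_{n,γ}(p)^{1/γ}/p for p ∈ (0,1). Then p ↦ R_γ(p) is strictly increasing on (0,1) if 0 < γ < 1, and strictly decreasing on (0,1) if γ > 1 (and constant equal to 1 if γ = 1). -/

import Mathlib

open MeasureTheory Real Finset

/-- `theta n γ p = E[(n/N(p))^{1-γ}]` where `N(p)-1 ~ Bin(n-1,p)`. -/
noncomputable def theta (n : ℕ) (γ p : ℝ) : ℝ :=
  ∑ k ∈ Finset.range n,
    ((n - 1).choose k : ℝ) * p ^ k * (1 - p) ^ (n - 1 - k) *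
      ((n : ℝ) / ((k : ℝ) + 1)) ^ (1 - γ)

/-- `beta n γ p = p * theta n γ p`. -/
noncomputable def beta (n : ℕ) (γ p : ℝ) : ℝ := p * theta n γ p

/-- Optimal tontine payout function. -/
noncomputable def Dopt (n : ℕ) (γ r : ℝ) (p : ℝ → ℝ) (t : ℝ) : ℝ :=
  beta n γ (p t) ^ (1 / γ) /
    ∫ s in Set.Ioi (0 : ℝ), Real.exp (-r * s) * beta n γ (p s) ^ (1 / γ)

/-- Cumulative discounted payout of the optimal tontine. -/
noncomputable def Delta (n : ℕ) (γ r : ℝ) (p : ℝ → ℝ) (t : ℝ) : ℝ :=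
  ∫ s in (0 : ℝ)..t, Real.exp (-r * s) * Dopt n γ r p s

/- ## Auxiliary lemmas -/

lemma psi_pos {γ : ℝ} (hγ0 : 0 < γ) (hγ1 : γ < 1) (k : ℕ) :
    0 < ((k:ℝ)+1) ^ (γ-1) * (((k:ℝ)+1) - γ) - (k:ℝ) ^ γ := by
  have hk1 : (0:ℝ) < (k:ℝ) + 1 := by positivity
  have hsplit : ((k:ℝ)+1) ^ (γ-1) * (((k:ℝ)+1) - γ)
      = ((k:ℝ)+1) ^ γ - γ * ((k:ℝ)+1) ^ (γ-1) := by
    have h1 : ((k:ℝ)+1) ^ γ = ((k:ℝ)+1) ^ (γ-1) * ((k:ℝ)+1) := by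
      rw [← Real.rpow_add_one hk1.ne' (γ-1)]; ring_nf
    rw [h1]; ring
  rcases Nat.eq_zero_or_pos k with hk | hk
  · subst hk
    simp only [Nat.cast_zero, Real.zero_rpow hγ0.ne', zero_add, Real.one_rpow]
    linarith
  · have hk' : (1:ℝ) ≤ (k:ℝ) := by exact_mod_cast hk
    have hab : (k:ℝ) < (k:ℝ) + 1 := by linarith
    have hcont : ContinuousOn (fun x : ℝ => x ^ γ) (Set.Icc (k:ℝ) ((k:ℝ)+1)) := by
      intro x hx
      exact (Real.continuousAt_rpow_const x γ (Or.inl (by nlinarith [hx.1]))).continuousWithinAt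
    have hderiv : ∀ x ∈ Set.Ioo (k:ℝ) ((k:ℝ)+1),
        HasDerivAt (fun x : ℝ => x ^ γ) (γ * x ^ (γ-1)) x := by
      intro x hx
      exact Real.hasDerivAt_rpow_const (Or.inl (by nlinarith [hx.1]))
    obtain ⟨c, hc, hceq⟩ := exists_hasDerivAt_eq_slope (fun x : ℝ => x ^ γ)
      (fun x => γ * x ^ (γ-1)) hab hcont hderiv
    have hc0 : (0:ℝ) < c := by nlinarith [hc.1]
    have hcmp : ((k:ℝ)+1) ^ (γ-1) < c ^ (γ-1) :=
      Real.rpow_lt_rpow_of_neg hc0 hc.2 (by linarith)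
    have hslope : γ * c ^ (γ-1) = ((k:ℝ)+1) ^ γ - (k:ℝ) ^ γ := by
      rw [hceq]; simp
    nlinarith [mul_lt_mul_of_pos_left hcmp hγ0]

lemma psi_neg {γ : ℝ} (hγ1 : 1 < γ) (k : ℕ) :
    ((k:ℝ)+1) ^ (γ-1) * (((k:ℝ)+1) - γ) - (k:ℝ) ^ γ < 0 := by
  have hγ0 : (0:ℝ) < γ := by linarith
  have hk1 : (0:ℝ) < (k:ℝ) + 1 := by positivity
  have hsplit : ((k:ℝ)+1) ^ (γ-1) * (((k:ℝ)+1) - γ)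
      = ((k:ℝ)+1) ^ γ - γ * ((k:ℝ)+1) ^ (γ-1) := by
    have h1 : ((k:ℝ)+1) ^ γ = ((k:ℝ)+1) ^ (γ-1) * ((k:ℝ)+1) := by
      rw [← Real.rpow_add_one hk1.ne' (γ-1)]; ring_nf
    rw [h1]; ring
  rcases Nat.eq_zero_or_pos k with hk | hk
  · subst hk
    simp only [Nat.cast_zero, Real.zero_rpow hγ0.ne', zero_add, Real.one_rpow]
    linarith
  · have hk' : (1:ℝ) ≤ (k:ℝ) := by exact_mod_cast hk
    have hab : (k:ℝ) < (k:ℝ) + 1 := by linarith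
    have hcont : ContinuousOn (fun x : ℝ => x ^ γ) (Set.Icc (k:ℝ) ((k:ℝ)+1)) := by
      intro x hx
      exact (Real.continuousAt_rpow_const x γ (Or.inl (by nlinarith [hx.1]))).continuousWithinAt
    have hderiv : ∀ x ∈ Set.Ioo (k:ℝ) ((k:ℝ)+1),
        HasDerivAt (fun x : ℝ => x ^ γ) (γ * x ^ (γ-1)) x := by
      intro x hx
      exact Real.hasDerivAt_rpow_const (Or.inl (by nlinarith [hx.1]))
    obtain ⟨c, hc, hceq⟩ := exists_hasDerivAt_eq_slope (fun x : ℝ => x ^ γ)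
      (fun x => γ * x ^ (γ-1)) hab hcont hderiv
    have hc0 : (0:ℝ) < c := by nlinarith [hc.1]
    have hcmp : c ^ (γ-1) < ((k:ℝ)+1) ^ (γ-1) :=
      Real.rpow_lt_rpow hc0.le hc.2 (by linarith)
    have hslope : γ * c ^ (γ-1) = ((k:ℝ)+1) ^ γ - (k:ℝ) ^ γ := by
      rw [hceq]; simp
    nlinarith [mul_lt_mul_of_pos_left hcmp hγ0]

lemma theta_succ (m : ℕ) (γ p : ℝ) :
    theta (m+1) γ p = ∑ k ∈ Finset.range (m+1),
      (m.choose k : ℝ) * p ^ k * (1 - p) ^ (m - k) *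
        (((m:ℝ) + 1) / ((k : ℝ) + 1)) ^ (1 - γ) := by
  unfold theta
  apply Finset.sum_congr rfl
  intro k _
  norm_num

lemma theta_pos (m : ℕ) (γ : ℝ) {p : ℝ} (hp : p ∈ Set.Ioo (0:ℝ) 1) :
    0 < theta (m+1) γ p := by
  rw [theta_succ]
  apply Finset.sum_pos _ (by simp)
  intro k hk
  have hk' : k ≤ m := Nat.lt_succ_iff.mp (Finset.mem_range.mp hk)
  have h1 : (0:ℝ) < (m.choose k : ℝ) := by exact_mod_cast Nat.choose_pos hk'
  have hq : (0:ℝ) < 1 - p := by linarith [hp.2]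
  have hb : (0:ℝ) < ((m:ℝ) + 1) / ((k:ℝ) + 1) := by positivity
  have := Real.rpow_pos_of_pos hb (1 - γ)
  have hp0 := hp.1
  positivity

lemma hasDerivAt_theta (m : ℕ) (γ : ℝ) (p : ℝ) :
    HasDerivAt (theta (m+1) γ)
      (∑ k ∈ Finset.range (m+1),
        (m.choose k : ℝ) * (((m:ℝ) + 1) / ((k : ℝ) + 1)) ^ (1 - γ) *
          ((k:ℝ) * p ^ (k-1) * (1-p) ^ (m-k) - ((m-k : ℕ):ℝ) * p ^ k * (1-p) ^ (m-k-1))) p := by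
  have : ∀ q : ℝ, theta (m+1) γ q = ∑ k ∈ Finset.range (m+1),
      (m.choose k : ℝ) * q ^ k * (1 - q) ^ (m - k) *
        (((m:ℝ) + 1) / ((k : ℝ) + 1)) ^ (1 - γ) := fun q => theta_succ m γ q
  rw [funext this]
  apply HasDerivAt.fun_sum
  intro k _
  have h1 : HasDerivAt (fun q : ℝ => q ^ k) ((k:ℝ) * p ^ (k-1)) p := hasDerivAt_pow k p
  have hlin : HasDerivAt (fun q : ℝ => 1 - q) (-1) p := (hasDerivAt_id p).const_sub 1
  have h2 : HasDerivAt (fun q : ℝ => (1-q) ^ (m-k))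
      (((m-k:ℕ):ℝ) * (1-p) ^ (m-k-1) * (-1)) p := hlin.pow (m-k)
  have h4 := ((h1.const_mul ((m.choose k : ℝ))).mul h2).mul_const
    ((((m:ℝ) + 1) / ((k : ℝ) + 1)) ^ (1 - γ))
  refine h4.congr_deriv ?_
  ring

lemma hc_eq (m k : ℕ) (γ : ℝ) :
    (((m:ℝ)+1) / ((k:ℝ)+1)) ^ (1-γ) = ((m:ℝ)+1)^(1-γ) * ((k:ℝ)+1)^(γ-1) := by
  rw [Real.div_rpow (by positivity) (by positivity)]
  rw [show (γ-1:ℝ) = -(1-γ) by ring, Real.rpow_neg (by positivity), div_eq_mul_inv]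

lemma key_identity (m : ℕ) (γ : ℝ) (hγ : 0 < γ) {p : ℝ} (hp : p ∈ Set.Ioo (0:ℝ) 1) :
    (1-γ) * theta (m+1) γ p +
      p * (∑ k ∈ Finset.range (m+1),
        (m.choose k : ℝ) * (((m:ℝ) + 1) / ((k : ℝ) + 1)) ^ (1 - γ) *
          ((k:ℝ) * p ^ (k-1) * (1-p) ^ (m-k) - ((m-k : ℕ):ℝ) * p ^ k * (1-p) ^ (m-k-1)))
    = ((m:ℝ)+1) ^ (1-γ) *
        ∑ k ∈ Finset.range (m+1), (m.choose k : ℝ) * p ^ k * (1-p) ^ (m-k) *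
          (((k:ℝ)+1) ^ (γ-1) * (((k:ℝ)+1) - γ) - (k:ℝ) ^ γ) := by
  have hp0 : (0:ℝ) < p := hp.1
  set q : ℝ := 1 - p with hq
  have hRHS : ((m:ℝ)+1) ^ (1-γ) *
        ∑ k ∈ Finset.range (m+1), (m.choose k : ℝ) * p ^ k * q ^ (m-k) *
          (((k:ℝ)+1) ^ (γ-1) * (((k:ℝ)+1) - γ) - (k:ℝ) ^ γ)
      = (∑ k ∈ Finset.range (m+1), ((m:ℝ)+1) ^ (1-γ) *
            ((m.choose k : ℝ) * ((k:ℝ)+1) ^ (γ-1) * (((k:ℝ)+1) - γ) * p ^ k * q ^ (m-k)))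
        - (∑ k ∈ Finset.range (m+1), ((m:ℝ)+1) ^ (1-γ) *
            ((m.choose k : ℝ) * (k:ℝ) ^ γ * p ^ k * q ^ (m-k))) := by
    rw [← Finset.sum_sub_distrib, Finset.mul_sum]
    apply Finset.sum_congr rfl
    intro k _
    ring
  rw [hRHS]
  have hLHS : (1-γ) * theta (m+1) γ p +
      p * (∑ k ∈ Finset.range (m+1),
        (m.choose k : ℝ) * (((m:ℝ) + 1) / ((k : ℝ) + 1)) ^ (1 - γ) *
          ((k:ℝ) * p ^ (k-1) * q ^ (m-k) - ((m-k : ℕ):ℝ) * p ^ k * q ^ (m-k-1)))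
      = (∑ k ∈ Finset.range (m+1), ((m:ℝ)+1) ^ (1-γ) *
            ((m.choose k : ℝ) * ((k:ℝ)+1) ^ (γ-1) * (((k:ℝ)+1) - γ) * p ^ k * q ^ (m-k)))
        - (∑ k ∈ Finset.range (m+1),
            (m.choose k : ℝ) * (((m:ℝ)+1)^(1-γ) * ((k:ℝ)+1)^(γ-1)) * ((m-k:ℕ):ℝ)
              * p ^ (k+1) * q ^ (m-k-1)) := by
    rw [theta_succ, Finset.mul_sum, Finset.mul_sum, ← Finset.sum_sub_distrib,
      ← Finset.sum_add_distrib]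
    apply Finset.sum_congr rfl
    intro k _
    rw [hc_eq]
    rcases k with _ | j
    · simp only [Nat.cast_zero, zero_add, Real.one_rpow, Nat.sub_zero]
      ring
    · simp only [Nat.add_sub_cancel]
      push_cast
      ring
  rw [hLHS]
  congr 1
  rw [Finset.sum_range_succ, Finset.sum_range_succ']
  have hlast : (m.choose m : ℝ) * (((m:ℝ)+1)^(1-γ) * ((m:ℝ)+1)^(γ-1)) * ((m-m:ℕ):ℝ)
      * p ^ (m+1) * q ^ (m-m-1) = 0 := by simp
  have h0 : ((m:ℝ)+1) ^ (1-γ) * ((m.choose 0 : ℝ) * ((0:ℕ):ℝ) ^ γ * p ^ 0 * q ^ (m-0)) = 0 := by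
    simp [Real.zero_rpow hγ.ne']
  rw [hlast, add_zero]
  rw [h0, add_zero]
  apply Finset.sum_congr rfl
  intro i hi
  have him : i < m := Finset.mem_range.mp hi
  have hch : (m.choose (i+1) : ℝ) * ((i:ℝ)+1) = (m.choose i : ℝ) * ((m-i:ℕ):ℝ) := by
    exact_mod_cast congrArg (fun t : ℕ => (t:ℝ)) (Nat.choose_succ_right_eq m i)
  have hpow : ((i:ℝ)+1) ^ γ = ((i:ℝ)+1) ^ (γ-1) * ((i:ℝ)+1) := by
    rw [← Real.rpow_add_one (by positivity : ((i:ℝ)+1) ≠ 0) (γ-1)]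
    ring_nf
  have hsub : m - (i+1) = m - i - 1 := by omega
  rw [hsub]
  push_cast
  rw [hpow]
  linear_combination (-(((m:ℝ)+1)^(1-γ) * ((i:ℝ)+1)^(γ-1) * p ^ (i+1) * q ^ (m-i-1))) * hch

lemma hasDerivAt_S (m : ℕ) (γ : ℝ) (hγ : 0 < γ) {p : ℝ} (hp : p ∈ Set.Ioo (0:ℝ) 1) :
    HasDerivAt (fun x : ℝ => x ^ (1-γ) * theta (m+1) γ x)
      (p ^ (-γ) * (((m:ℝ)+1) ^ (1-γ) *
        ∑ k ∈ Finset.range (m+1), (m.choose k : ℝ) * p ^ k * (1-p) ^ (m-k) *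
          (((k:ℝ)+1) ^ (γ-1) * (((k:ℝ)+1) - γ) - (k:ℝ) ^ γ))) p := by
  have hp0 : (0:ℝ) < p := hp.1
  have h1 : HasDerivAt (fun x : ℝ => x ^ (1-γ)) ((1-γ) * p ^ (1-γ-1)) p :=
    Real.hasDerivAt_rpow_const (Or.inl hp0.ne')
  have h3 := h1.fun_mul (hasDerivAt_theta m γ p)
  refine h3.congr_deriv ?_
  have e1 : p ^ (1-γ-1) = p ^ (-γ) := by rw [show (1-γ-1:ℝ) = -γ by ring]
  have e2 : p ^ (1-γ) = p ^ (-γ) * p := by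
    rw [show (1-γ:ℝ) = -γ+1 by ring, Real.rpow_add_one hp0.ne']
  rw [e1, e2, ← key_identity m γ hγ hp]
  ring

lemma S_nonneg (m : ℕ) (γ : ℝ) {p : ℝ} (hp : p ∈ Set.Ioo (0:ℝ) 1) :
    0 ≤ p ^ (1-γ) * theta (m+1) γ p :=
  mul_nonneg (Real.rpow_nonneg hp.1.le _) (theta_pos m γ hp).le

lemma key_eq (m : ℕ) (γ : ℝ) (hγ : 0 < γ) {p : ℝ} (hp : p ∈ Set.Ioo (0:ℝ) 1) :
    beta (m+1) γ p ^ (1/γ) / p = (p ^ (1-γ) * theta (m+1) γ p) ^ (1/γ) := by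
  have hp0 : (0:ℝ) < p := hp.1
  have hθ := theta_pos m γ hp
  have hmul : p ^ (γ:ℝ) * p ^ (1-γ) = p := by
    rw [← Real.rpow_add hp0]; norm_num
  have hbeta : beta (m+1) γ p = p ^ (γ:ℝ) * (p ^ (1-γ) * theta (m+1) γ p) := by
    unfold beta
    rw [← mul_assoc, hmul]
  rw [hbeta, Real.mul_rpow (Real.rpow_nonneg hp0.le _) (S_nonneg m γ hp),
    ← Real.rpow_mul hp0.le, mul_one_div_cancel hγ.ne', Real.rpow_one,
    mul_div_cancel_left₀ _ hp0.ne']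

lemma S_strictMonoOn (m : ℕ) {γ : ℝ} (hγ : 0 < γ) (hγ1 : γ < 1) :
    StrictMonoOn (fun x : ℝ => x ^ (1-γ) * theta (m+1) γ x) (Set.Ioo 0 1) := by
  apply strictMonoOn_of_deriv_pos (convex_Ioo 0 1)
  · intro x hx
    exact (hasDerivAt_S m γ hγ hx).continuousAt.continuousWithinAt
  · intro x hx
    rw [interior_Ioo] at hx
    rw [(hasDerivAt_S m γ hγ hx).deriv]
    have hq : (0:ℝ) < 1 - x := by linarith [hx.2]
    apply mul_pos (Real.rpow_pos_of_pos hx.1 _)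
    apply mul_pos (Real.rpow_pos_of_pos (show (0:ℝ) < (m:ℝ)+1 by positivity) (1-γ))
    apply Finset.sum_pos _ (by simp)
    intro k hk
    have hk' : k ≤ m := Nat.lt_succ_iff.mp (Finset.mem_range.mp hk)
    have h1 : (0:ℝ) < (m.choose k : ℝ) := by exact_mod_cast Nat.choose_pos hk'
    exact mul_pos (mul_pos (mul_pos h1 (pow_pos hx.1 k)) (pow_pos hq (m-k))) (psi_pos hγ hγ1 k)

lemma S_strictAntiOn (m : ℕ) {γ : ℝ} (hγ1 : 1 < γ) :
    StrictAntiOn (fun x : ℝ => x ^ (1-γ) * theta (m+1) γ x) (Set.Ioo 0 1) := by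
  have hγ : (0:ℝ) < γ := by linarith
  apply strictAntiOn_of_deriv_neg (convex_Ioo 0 1)
  · intro x hx
    exact (hasDerivAt_S m γ hγ hx).continuousAt.continuousWithinAt
  · intro x hx
    rw [interior_Ioo] at hx
    rw [(hasDerivAt_S m γ hγ hx).deriv]
    have hq : (0:ℝ) < 1 - x := by linarith [hx.2]
    apply mul_neg_of_pos_of_neg (Real.rpow_pos_of_pos hx.1 _)
    apply mul_neg_of_pos_of_neg (Real.rpow_pos_of_pos (show (0:ℝ) < (m:ℝ)+1 by positivity) (1-γ))
    apply Finset.sum_neg _ (by simp)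
    intro k hk
    have hk' : k ≤ m := Nat.lt_succ_iff.mp (Finset.mem_range.mp hk)
    have h1 : (0:ℝ) < (m.choose k : ℝ) := by exact_mod_cast Nat.choose_pos hk'
    exact mul_neg_of_pos_of_neg (mul_pos (mul_pos h1 (pow_pos hx.1 k)) (pow_pos hq (m-k))) (psi_neg hγ1 k)

/-- `p ↦ R_γ(p) = β_{n,γ}(p)^{1/γ}/p` is strictly increasing on `(0,1)` when
`0 < γ < 1`, strictly decreasing when `γ > 1`, and constantly `1` when `γ = 1`. -/
theorem R_monotone_in_p
    (n : ℕ) (hn : 2 ≤ n) (γ : ℝ) (hγ : 0 < γ) :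
    (γ < 1 → StrictMonoOn (fun p => (beta n γ p) ^ (1 / γ) / p) (Set.Ioo 0 1)) ∧
    (1 < γ → StrictAntiOn (fun p => (beta n γ p) ^ (1 / γ) / p) (Set.Ioo 0 1)) ∧
    (γ = 1 → ∀ p ∈ Set.Ioo (0 : ℝ) 1, (beta n γ p) ^ (1 / γ) / p = 1) := by
  obtain ⟨m, rfl⟩ : ∃ m, n = m + 1 := ⟨n - 1, by omega⟩
  refine ⟨fun hγ1 => ?_, fun hγ1 => ?_, fun hγ1 => ?_⟩
  · intro x hx y hy hxy
    show beta (m+1) γ x ^ (1/γ) / x < beta (m+1) γ y ^ (1/γ) / y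
    rw [key_eq m γ hγ hx, key_eq m γ hγ hy]
    exact Real.rpow_lt_rpow (S_nonneg m γ hx) (S_strictMonoOn m hγ hγ1 hx hy hxy)
      (by positivity)
  · intro x hx y hy hxy
    show beta (m+1) γ y ^ (1/γ) / y < beta (m+1) γ x ^ (1/γ) / x
    rw [key_eq m γ hγ hx, key_eq m γ hγ hy]
    exact Real.rpow_lt_rpow (S_nonneg m γ hy) (S_strictAntiOn m hγ1 hx hy hxy)
      (by positivity)
  · subst hγ1
    intro p hp
    have hθ : theta (m+1) 1 p = 1 := by
      rw [theta_succ]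
      have hterm : ∀ k ∈ Finset.range (m+1),
          (m.choose k : ℝ) * p ^ k * (1 - p) ^ (m - k) *
            (((m:ℝ) + 1) / ((k : ℝ) + 1)) ^ (1 - (1:ℝ))
          = p ^ k * (1 - p) ^ (m - k) * (m.choose k : ℝ) := by
        intro k _
        rw [sub_self, Real.rpow_zero]
        ring
      rw [Finset.sum_congr rfl hterm, ← add_pow]
      norm_num
    have hbeta : beta (m+1) 1 p = p := by
      unfold beta; rw [hθ, mul_one]
    rw [hbeta]
    norm_num
    exact hp.1.ne'
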